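/- Let α ∈ (0,1] and let (x*, p*) be an α-slack equilibrium satisfying the cheapest-bundle property. Then x* is 𝒞-constrained Pareto efficient. -/
import Mathlib


open Finset

noncomputable def dotO {O : Type*} [Fintype O] (p z : O → ℝ) : ℝ := ∑ l, p l * z l

noncomputable def dotIO {I O : Type*} [Fintype I] [Fintype O] (a x : I → O → ℝ) : ℝ :=
  ∑ i, ∑ l, a i l * x i l

noncomputable def pers {I O C : Type*} [Fintype C] (a : C → I → O → ℝ) (p : C → ℝ)
    (i : I) : O → ℝ :=
  fun l => ∑ c, a c i l * p c

theorem statement19 {I O C : Type*} [Fintype I] [Fintype O] [Fintype C]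
    (S : Finset (I → O → ℝ)) (hSne : S.Nonempty)
    (𝒞 : Set (I → O → ℝ)) (h𝒞 : 𝒞 = convexHull ℝ (S : Set (I → O → ℝ)))
    (h𝒞nn : ∀ x ∈ 𝒞, ∀ i l, 0 ≤ x i l)
    (X : I → Set (O → ℝ))
    (hXnn : ∀ i, ∀ z ∈ X i, ∀ l, 0 ≤ z l)
    (hXcpt : ∀ i, IsCompact (X i))
    (hXcvx : ∀ i, Convex ℝ (X i))
    (hX0 : ∀ i, (0 : O → ℝ) ∈ X i)
    (hXdc : ∀ i, ∀ y z : O → ℝ, (∀ l, 0 ≤ y l) → (∀ l, y l ≤ z l) → z ∈ X i → y ∈ X i)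
    (a : C → I → O → ℝ) (b : C → ℝ)
    (ha : ∀ c i l, 0 ≤ a c i l) (hb : ∀ c, 0 < b c)
    (hlcs : {x : I → O → ℝ | (∀ i l, 0 ≤ x i l) ∧ ∃ x' ∈ 𝒞, ∀ i l, x i l ≤ x' i l}
      = {x : I → O → ℝ | (∀ i l, 0 ≤ x i l) ∧ (∀ i, x i ∈ X i) ∧ ∀ c, dotIO (a c) x ≤ b c})
    (u : I → (O → ℝ) → ℝ)
    (ω : I → O → ℝ) (hωX : ∀ i, ω i ∈ X i) (hω𝒞 : ω ∈ 𝒞)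
    (α : ℝ) (hα0 : 0 < α) (hα1 : α ≤ 1)
    (x : I → O → ℝ) (p : C → ℝ)
    (hp : ∀ c, 0 ≤ p c)
    (hopt : ∀ i, x i ∈ X i ∧
      dotO (pers a p i) (x i) ≤ α + (1 - α) * dotO (pers a p i) (ω i) ∧
      ∀ z ∈ X i, dotO (pers a p i) z ≤ α + (1 - α) * dotO (pers a p i) (ω i) →
        u i z ≤ u i (x i))
    (hfeas : x ∈ 𝒞)
    (hcs : ∀ c, dotIO (a c) x < b c → p c = 0)
    (hcb : ∀ i, ∀ z ∈ X i, u i z = u i (x i) →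
      dotO (pers a p i) (x i) ≤ dotO (pers a p i) z) :
    ¬ ∃ y ∈ 𝒞, (∀ i, u i (x i) ≤ u i (y i)) ∧ ∃ j, u j (x j) < u j (y j) := by
  have key : ∀ z : I → O → ℝ,
      ∑ i, dotO (pers a p i) (z i) = ∑ c, p c * dotIO (a c) z := by
    intro z
    simp only [dotO, dotIO, pers, Finset.sum_mul, Finset.mul_sum]
    rw [show (∑ i, ∑ l, ∑ c, a c i l * p c * z i l : ℝ)
        = ∑ i, ∑ c, ∑ l, a c i l * p c * z i l from
      Finset.sum_congr rfl fun i _ => Finset.sum_comm .., Finset.sum_comm]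
    refine Finset.sum_congr rfl fun c _ => Finset.sum_congr rfl fun i _ =>
      Finset.sum_congr rfl fun l _ => by ring
  have memRHS : ∀ z ∈ 𝒞, (∀ i, z i ∈ X i) ∧ ∀ c, dotIO (a c) z ≤ b c := by
    intro z hz
    have : z ∈ {x : I → O → ℝ | (∀ i l, 0 ≤ x i l) ∧ ∃ x' ∈ 𝒞, ∀ i l, x i l ≤ x' i l} :=
      ⟨h𝒞nn z hz, z, hz, fun i l => le_refl _⟩
    rw [hlcs] at this
    exact ⟨this.2.1, this.2.2⟩
  rintro ⟨y, hy𝒞, hge, j, hj⟩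
  obtain ⟨hyX, hycon⟩ := memRHS y hy𝒞
  obtain ⟨hxX, hxcon⟩ := memRHS x hfeas
  have hviol : ∀ i, u i (x i) < u i (y i) →
      dotO (pers a p i) (x i) < dotO (pers a p i) (y i) := by
    intro i hlt
    have hbud : ¬ (dotO (pers a p i) (y i) ≤ α + (1 - α) * dotO (pers a p i) (ω i)) :=
      fun hb => absurd ((hopt i).2.2 (y i) (hyX i) hb) (not_le.mpr hlt)
    have := (hopt i).2.1
    linarith [not_le.mp hbud]
  have hxcost : ∀ i, dotO (pers a p i) (x i) ≤ dotO (pers a p i) (y i) := by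
    intro i
    rcases lt_or_eq_of_le (hge i) with h | h
    · exact (hviol i h).le
    · exact hcb i (y i) (hyX i) h.symm
  have hsum : ∑ i, dotO (pers a p i) (x i) < ∑ i, dotO (pers a p i) (y i) :=
    Finset.sum_lt_sum (fun i _ => hxcost i) ⟨j, Finset.mem_univ j, hviol j hj⟩
  have h1 : ∑ c, p c * dotIO (a c) x = ∑ c, p c * b c := by
    refine Finset.sum_congr rfl fun c _ => ?_
    rcases lt_or_eq_of_le (hxcon c) with h | h
    · simp [hcs c h]
    · rw [h]
  have h2 : ∑ c, p c * dotIO (a c) y ≤ ∑ c, p c * b c :=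
    Finset.sum_le_sum fun c _ => mul_le_mul_of_nonneg_left (hycon c) (hp c)
  rw [key x, key y] at hsum
  linarith
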